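/- arXiv:1110.2716 — 3 statements merged into one kernel-verified Lean document; each statement's English description precedes it below -/
import Mathlib

section
/- In the polynomial ring R = k[x_a : a ∈ N], for any a, a₁, b ∈ N and i ∈ [n], the identity x_b·f_{i,a,a₁} − x_{a₁}·f_{i,a,b} = x_{s(i,b,a)}·g_{i,a₁,s(i,a,b)} − x_{s(i,a,a₁)}·g_{i,s(i,a₁,a),b} holds. -/
open MvPolynomial Finset

/-- The index set `N = [r 1] × ⋯ × [r n]`, realized as dependent functions. -/
abbrev Idx {n : ℕ} (r : Fin n → ℕ) := ∀ i, Fin (r i)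

variable {n : ℕ} {r : Fin n → ℕ}

/-- The switch `s(K,a,b)`: `b i` in the components of `K`, `a i` elsewhere. -/
def sw (K : Finset (Fin n)) (a b : Idx r) : Idx r := fun i => if i ∈ K then b i else a i

/-- The distance `d(a,b) = #{i : a i ≠ b i}`. -/
def hdist (a b : Idx r) : ℕ := (univ.filter fun i => a i ≠ b i).card

/-- The truncated distance `d_t(a,b) = #{i ∈ [t] : a i ≠ b i}`. -/
def hdistT (t : ℕ) (a b : Idx r) : ℕ :=
  (univ.filter fun i : Fin n => (i : ℕ) < t ∧ a i ≠ b i).card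

/-- `c : ℕ → N` is a path of length `m` from `a` to `b` inside `S`:
consecutive elements differ in exactly one component. -/
def IsPath (S : Set (Idx r)) (a b : Idx r) (m : ℕ) (c : ℕ → Idx r) : Prop :=
  c 0 = a ∧ c m = b ∧ (∀ j ≤ m, c j ∈ S) ∧ ∀ j < m, hdist (c j) (c (j + 1)) = 1

/-- `a` and `b` are connected in `S`. -/
def Connected (S : Set (Idx r)) (a b : Idx r) : Prop := ∃ m c, IsPath S a b m c

/-- The minimal path length `pl_S(a,b)`. -/
noncomputable def pl (S : Set (Idx r)) (a b : Idx r) : ℕ :=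
  sInf {m | ∃ c, IsPath S a b m c}

/-- `S` is `t`-switchable. -/
def Switchable (t : ℕ) (S : Set (Idx r)) : Prop :=
  ∀ a ∈ S, ∀ b ∈ S, hdist a b = 2 → ∀ i : Fin n, (i : ℕ) < t →
    sw {i} a b ∈ S ∧ sw {i} b a ∈ S

/-- `S` is `t`-signed: `t`-switchable, and each connectedness class satisfies one of:
constant first `t` coordinates, pairwise distance at most 1, or path-independent
parity of path lengths. -/
def Signed (t : ℕ) (S : Set (Idx r)) : Prop :=
  Switchable t S ∧
  ∀ a ∈ S,
    (∀ b c, Connected S a b → Connected S a c → ∀ i : Fin n, (i : ℕ) < t → b i = c i) ∨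
    (∀ b c, Connected S a b → Connected S a c → hdist b c ≤ 1) ∨
    (∀ b c, Connected S a b → Connected S a c →
      ∀ m m' p p', IsPath S b c m p → IsPath S b c m' p' → m % 2 = m' % 2)

variable (k : Type*) [Field k]

/-- The generalized determinant `f_{i,a,b}`. -/
noncomputable def fdet (i : Fin n) (a b : Idx r) : MvPolynomial (Idx r) k :=
  X a * X b - X (sw {i} a b) * X (sw {i} b a)

/-- The generalized permanent `g_{i,a,b}`. -/
noncomputable def gperm (i : Fin n) (a b : Idx r) : MvPolynomial (Idx r) k :=
  X a * X b + X (sw {i} a b) * X (sw {i} b a)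

/-- The binomial `h_{S,K,a,b}`. -/
noncomputable def hbin (S : Set (Idx r)) (K : Finset (Fin n)) (a b : Idx r) :
    MvPolynomial (Idx r) k :=
  X a * X b - (-1) ^ (K.card * (pl S a b - 1)) * (X (sw K a b) * X (sw K b a))

/-- The slice permanental ideal `J^⟨t⟩`. -/
noncomputable def Jt (t : ℕ) : Ideal (MvPolynomial (Idx r) k) :=
  Ideal.span {p | ∃ (a b : Idx r) (i : Fin n),
    hdist a b = 2 ∧ (i : ℕ) < t ∧ a i ≠ b i ∧ p = gperm k i a b}

/-- The ideal `J̃^⟨t⟩_S`. -/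
noncomputable def Jtilde (t : ℕ) (S : Set (Idx r)) : Ideal (MvPolynomial (Idx r) k) :=
  Ideal.span {p | ∃ (a b : Idx r) (i : Fin n),
    Connected S a b ∧ (i : ℕ) < t ∧ a i ≠ b i ∧ p = hbin k S {i} a b}

/-- The ideal `Var^⟨t⟩_S = (x_a : a ∉ S)`. -/
noncomputable def VarIdeal (S : Set (Idx r)) : Ideal (MvPolynomial (Idx r) k) :=
  Ideal.span {p | ∃ a ∉ S, p = X a}

/-- The ideal `Q^⟨t⟩_S = Var^⟨t⟩_S + J̃^⟨t⟩_S`. -/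
noncomputable def Qideal (t : ℕ) (S : Set (Idx r)) : Ideal (MvPolynomial (Idx r) k) :=
  VarIdeal k S + Jtilde k t S

/-- The ideal `Ĵ^⟨t⟩`. -/
noncomputable def Jhat (t : ℕ) : Ideal (MvPolynomial (Idx r) k) :=
  Ideal.span {p | ∃ (a b : Idx r) (i : Fin n),
    hdist a b = 3 ∧ hdistT t a b = 3 ∧ (i : ℕ) < t ∧ a i ≠ b i ∧ p = gperm k i a b}

/-- `S` is a maximal `t`-signed set. -/
noncomputable def MaximalSigned (t : ℕ) (S : Set (Idx r)) : Prop :=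
  Signed t S ∧ ∀ T : Set (Idx r), Signed t T → S ⊆ T → Qideal k t S ≤ Qideal k t T


lemma sw_sw_left {n : ℕ} {r : Fin n → ℕ} (K : Finset (Fin n)) (a b c : Idx r) :
    sw K (sw K a b) c = sw K a c := by
  funext j; simp only [sw]; split <;> simp_all

lemma sw_sw_right {n : ℕ} {r : Fin n → ℕ} (K : Finset (Fin n)) (a b c : Idx r) :
    sw K a (sw K b c) = sw K a c := by
  funext j; simp only [sw]; split <;> simp_all

/-- the basic determinant/permanent identity. -/
theorem stmt2 (a a₁ b : Idx r) (i : Fin n) :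
    X b * fdet k i a a₁ - X a₁ * fdet k i a b =
      X (sw {i} b a) * gperm k i a₁ (sw {i} a b) -
        X (sw {i} a a₁) * gperm k i (sw {i} a₁ a) b := by
  simp only [fdet, gperm, sw_sw_left, sw_sw_right]
  ring
end

section
/- Let S be a t-switchable subset of N, and suppose a, b ∈ S are connected via a path c₀ = a, c₁, …, c_k = b in S where consecutive elements differ in exactly one component. Then for every subset K ⊆ [t], the elements s(K,a,b) and s(K,b,a) lie in S and are connected to a and b in S. -/
open MvPolynomial Finset

variable {n : ℕ} {r : Fin n → ℕ}

variable (k : Type*) [Field k]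

section Stmt5Aux

lemma hdist_comm' (a b : Idx r) : hdist a b = hdist b a := by
  unfold hdist; congr 1; ext i; simp [ne_comm]

lemma hdist_eq_zero_iff' {a b : Idx r} : hdist a b = 0 ↔ a = b := by
  unfold hdist
  rw [Finset.card_eq_zero, Finset.filter_eq_empty_iff]
  simp [funext_iff]

lemma connected_refl' {S : Set (Idx r)} {a : Idx r} (ha : a ∈ S) : Connected S a a :=
  ⟨0, fun _ => a, rfl, rfl, fun _ _ => ha, fun j hj => absurd hj (Nat.not_lt_zero j)⟩

lemma connected_symm' {S : Set (Idx r)} {a b : Idx r} (h : Connected S a b) :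
    Connected S b a := by
  obtain ⟨m, c, h0, hm, hmem, hstep⟩ := h
  refine ⟨m, fun j => c (m - j), by simpa using hm, by simpa using h0,
    fun j _ => hmem _ (Nat.sub_le _ _), fun j hj => ?_⟩
  show hdist (c (m - j)) (c (m - (j + 1))) = 1
  have h1 : m - j = (m - (j + 1)) + 1 := by omega
  rw [h1, hdist_comm']
  exact hstep _ (by omega)

lemma connected_trans' {S : Set (Idx r)} {a b d : Idx r} (h1 : Connected S a b)
    (h2 : Connected S b d) : Connected S a d := by
  obtain ⟨m1, c1, hc10, hc1m, hmem1, hstep1⟩ := h1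
  obtain ⟨m2, c2, hc20, hc2m, hmem2, hstep2⟩ := h2
  refine ⟨m1 + m2, fun j => if j ≤ m1 then c1 j else c2 (j - m1), by simp [hc10], ?_, ?_, ?_⟩
  · show (if m1 + m2 ≤ m1 then c1 (m1 + m2) else c2 (m1 + m2 - m1)) = d
    by_cases h : m1 + m2 ≤ m1
    · have hm1 : m1 + m2 = m1 := by omega
      rw [if_pos h, hm1, hc1m, ← hc20]
      rw [show m2 = 0 by omega] at hc2m
      exact hc2m
    · rw [if_neg h, Nat.add_sub_cancel_left]
      exact hc2m
  · intro j hj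
    by_cases h : j ≤ m1
    · simpa [h] using hmem1 j h
    · simp only [if_neg h]
      exact hmem2 _ (by omega)
  · intro j hj
    show hdist (if j ≤ m1 then c1 j else c2 (j - m1))
      (if j + 1 ≤ m1 then c1 (j + 1) else c2 (j + 1 - m1)) = 1
    by_cases h : j + 1 ≤ m1
    · simp only [if_pos h, if_pos (by omega : j ≤ m1)]
      exact hstep1 j (by omega)
    · have hcj : (if j ≤ m1 then c1 j else c2 (j - m1)) = c2 (j - m1) := by
        by_cases h' : j ≤ m1
        · have : j = m1 := by omega
          simp [if_pos h', this, hc1m, ← hc20]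
        · simp [h']
      rw [hcj, if_neg (by omega : ¬ j + 1 ≤ m1)]
      have : j + 1 - m1 = (j - m1) + 1 := by omega
      rw [this]
      exact hstep2 _ (by omega)

lemma connected_of_hdist_le_one' {S : Set (Idx r)} {a b : Idx r} (ha : a ∈ S) (hb : b ∈ S)
    (h : hdist a b ≤ 1) : Connected S a b := by
  rcases Nat.lt_or_ge (hdist a b) 1 with h' | h'
  · have : a = b := hdist_eq_zero_iff'.mp (by omega)
    subst this
    exact connected_refl' ha
  · have hd1 : hdist a b = 1 := le_antisymm h h'
    refine ⟨1, fun j => if j = 0 then a else b, by simp, by simp, ?_, ?_⟩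
    · intro j _
      by_cases h : j = 0 <;> simp [h, ha, hb]
    · intro j hj
      have : j = 0 := by omega
      simpa [this] using hd1

lemma connected_mem_left {S : Set (Idx r)} {a b : Idx r} (h : Connected S a b) : a ∈ S := by
  obtain ⟨m, c, h0, _, hmem, _⟩ := h
  exact h0 ▸ hmem 0 (Nat.zero_le m)

lemma connected_mem_right {S : Set (Idx r)} {a b : Idx r} (h : Connected S a b) : b ∈ S :=
  connected_mem_left (connected_symm' h)

/-- Transport lemma: along a path from `a` to `b`, the element obtained from `b` by
setting coordinate `p < t` to `β` can be transported back to `a`. -/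
lemma transport {t : ℕ} {S : Set (Idx r)} (hS : Switchable t S) (p : Fin n)
    (hp : (p : ℕ) < t) :
    ∀ m : ℕ, ∀ a b : Idx r, ∀ c, IsPath S a b m c → ∀ β : Fin (r p),
      Function.update b p β ∈ S →
      Function.update a p β ∈ S ∧ Connected S a (Function.update a p β) ∧
        Connected S (Function.update a p β) (Function.update b p β) := by
  intro m
  induction m with
  | zero =>
    rintro a b c ⟨h0, hm, hmem, -⟩ β hB
    have hab : a = b := by rw [← h0, hm]
    subst hab
    have ha : a ∈ S := h0 ▸ hmem 0 le_rfl
    have hle : hdist a (Function.update a p β) ≤ 1 := by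
      have hsub : (univ.filter fun i => a i ≠ Function.update a p β i) ⊆ {p} := by
        intro i hi
        simp only [Finset.mem_filter, Finset.mem_univ, true_and] at hi
        simp only [Finset.mem_singleton]
        by_contra hip
        exact hi (by rw [Function.update_of_ne hip])
      calc (univ.filter fun i => a i ≠ Function.update a p β i).card
          ≤ ({p} : Finset (Fin n)).card := Finset.card_le_card hsub
        _ = 1 := Finset.card_singleton p
    exact ⟨hB, connected_of_hdist_le_one' ha hB hle, connected_refl' hB⟩
  | succ m ih =>
    rintro a b c ⟨h0, hm, hmem, hstep⟩ β hB
    set b' := c m with hb'def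
    have hpath' : IsPath S a b' m c :=
      ⟨h0, rfl, fun j hj => hmem j (le_trans hj (Nat.le_succ m)),
        fun j hj => hstep j (lt_trans hj (Nat.lt_succ_self m))⟩
    have hb'mem : b' ∈ S := hmem m (Nat.le_succ m)
    have hbmem : b ∈ S := hm ▸ hmem (m + 1) le_rfl
    have hd1 : hdist b' b = 1 := by
      have := hstep m (Nat.lt_succ_self m)
      rwa [hm] at this
    obtain ⟨q, hq⟩ := Finset.card_eq_one.mp hd1
    have hqmem : q ∈ univ.filter fun i => b' i ≠ b i := by
      rw [hq]; exact Finset.mem_singleton_self q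
    have hqne : b' q ≠ b q := (Finset.mem_filter.mp hqmem).2
    have hother : ∀ i, i ≠ q → b' i = b i := by
      intro i hi
      by_contra hne
      have : i ∈ ({q} : Finset (Fin n)) :=
        hq ▸ Finset.mem_filter.mpr ⟨Finset.mem_univ i, hne⟩
      exact hi (Finset.mem_singleton.mp this)
    have hB' : Function.update b' p β ∈ S := by
      rcases eq_or_ne q p with rfl | hqp
      · have heq : Function.update b' q β = Function.update b q β := by
          funext i
          rcases eq_or_ne i q with rfl | h
          · simp
          · rw [Function.update_of_ne h, Function.update_of_ne h, hother i h]
        rw [heq]; exact hB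
      · have hpq : p ≠ q := fun h => hqp h.symm
        have hb'p : b' p = b p := hother p hpq
        rcases eq_or_ne β (b p) with rfl | hβ
        · have : Function.update b' p (b p) = b' := by
            rw [← hb'p]; exact Function.update_eq_self p b'
          rw [this]; exact hb'mem
        · have hd2 : hdist (Function.update b p β) b' = 2 := by
            have hfil : (univ.filter fun i => Function.update b p β i ≠ b' i)
                = {p, q} := by
              ext i
              simp only [Finset.mem_filter, Finset.mem_univ, true_and,
                Finset.mem_insert, Finset.mem_singleton]
              rcases eq_or_ne i p with rfl | hip
              · constructor
                · intro _; exact Or.inl rfl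
                · intro _
                  rw [Function.update_self, hb'p]
                  exact hβ
              · rw [Function.update_of_ne hip]
                rcases eq_or_ne i q with rfl | hiq
                · constructor
                  · intro _; exact Or.inr rfl
                  · intro _; exact fun h => hqne h.symm
                · constructor
                  · intro h; exact absurd (hother i hiq).symm h
                  · rintro (h | h) <;> [exact absurd h hip; exact absurd h hiq]
            unfold hdist
            rw [hfil, Finset.card_insert_of_notMem (by simpa using hpq),
              Finset.card_singleton]
          obtain ⟨-, h2⟩ := hS _ hB _ hb'mem hd2 p hp
          have heq : sw {p} b' (Function.update b p β) = Function.update b' p β := by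
            funext i
            rcases eq_or_ne i p with rfl | h
            · simp [sw]
            · simp [sw, h, Function.update_of_ne h]
          rwa [heq] at h2
    obtain ⟨hA, haA, hAB'⟩ := ih a b' c hpath' β hB'
    refine ⟨hA, haA, connected_trans' hAB' ?_⟩
    have hle : hdist (Function.update b' p β) (Function.update b p β) ≤ 1 := by
      have hsub : (univ.filter fun i =>
          Function.update b' p β i ≠ Function.update b p β i) ⊆ {q} := by
        intro i hi
        simp only [Finset.mem_filter, Finset.mem_univ, true_and] at hi
        simp only [Finset.mem_singleton]
        by_contra hiq
        rcases eq_or_ne i p with rfl | hip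
        · simp at hi
        · rw [Function.update_of_ne hip, Function.update_of_ne hip] at hi
          exact hi (hother i hiq)
      calc (univ.filter fun i =>
            Function.update b' p β i ≠ Function.update b p β i).card
          ≤ ({q} : Finset (Fin n)).card := Finset.card_le_card hsub
        _ = 1 := Finset.card_singleton q
    exact connected_of_hdist_le_one' hB' hB hle

/-- Single switch of a connected pair. -/
lemma single_switch {t : ℕ} {S : Set (Idx r)} (hS : Switchable t S) {a b : Idx r}
    (hab : Connected S a b) (p : Fin n) (hp : (p : ℕ) < t) :
    Function.update a p (b p) ∈ S ∧ Connected S a (Function.update a p (b p)) ∧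
      Connected S b (Function.update a p (b p)) := by
  obtain ⟨m, c, hpath⟩ := hab
  have hbmem : b ∈ S := hpath.2.1 ▸ hpath.2.2.1 m le_rfl
  have hB : Function.update b p (b p) ∈ S := by
    rw [Function.update_eq_self]; exact hbmem
  obtain ⟨h1, h2, h3⟩ := transport hS p hp m a b c hpath (b p) hB
  rw [Function.update_eq_self] at h3
  exact ⟨h1, h2, connected_symm' h3⟩

lemma multi_switch {t : ℕ} {S : Set (Idx r)} (hS : Switchable t S) {a b : Idx r}
    (hab : Connected S a b) :
    ∀ N : ℕ, ∀ K : Finset (Fin n), (∀ i ∈ K, (i : ℕ) < t) →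
      (K.filter fun i => a i ≠ b i).card = N →
      sw K a b ∈ S ∧ sw K b a ∈ S ∧ Connected S a (sw K a b) ∧
        Connected S a (sw K b a) ∧ Connected S b (sw K a b) ∧ Connected S b (sw K b a) := by
  intro N
  induction N with
  | zero =>
    intro K _ h0
    have heq : ∀ i ∈ K, a i = b i := by
      intro i hi
      by_contra hne
      have : i ∈ K.filter fun i => a i ≠ b i := Finset.mem_filter.mpr ⟨hi, hne⟩
      rw [Finset.card_eq_zero.mp h0] at this
      exact absurd this (Finset.notMem_empty i)
    have h1 : sw K a b = a := by
      funext i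
      by_cases h : i ∈ K
      · simp [sw, h, (heq i h).symm]
      · simp [sw, h]
    have h2 : sw K b a = b := by
      funext i
      by_cases h : i ∈ K
      · simp [sw, h, heq i h]
      · simp [sw, h]
    rw [h1, h2]
    exact ⟨connected_mem_left hab, connected_mem_right hab,
      connected_refl' (connected_mem_left hab), hab, connected_symm' hab,
      connected_refl' (connected_mem_right hab)⟩
  | succ N ih =>
    intro K hK hcard
    have hne : (K.filter fun i => a i ≠ b i).Nonempty :=
      Finset.card_pos.mp (by omega)
    obtain ⟨p, hpmem⟩ := hne
    obtain ⟨hpK, hpab⟩ := Finset.mem_filter.mp hpmem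
    have hpt : (p : ℕ) < t := hK p hpK
    set K' := K.erase p with hK'def
    have hcard' : (K'.filter fun i => a i ≠ b i).card = N := by
      rw [hK'def, Finset.filter_erase, Finset.card_erase_of_mem hpmem, hcard]
      omega
    obtain ⟨hu, hv, hau, hav, hbu, hbv⟩ :=
      ih K' (fun i hi => hK i (Finset.mem_of_mem_erase hi)) hcard'
    have hub : Connected S (sw K' a b) b := connected_trans' (connected_symm' hau) hab
    have hva : Connected S (sw K' b a) a :=
      connected_trans' (connected_symm' hbv) (connected_symm' hab)
    obtain ⟨hy, huy, hby⟩ := single_switch hS hub p hpt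
    obtain ⟨hz, hvz, haz⟩ := single_switch hS hva p hpt
    have hyeq : Function.update (sw K' a b) p (b p) = sw K a b := by
      funext i
      rcases eq_or_ne i p with rfl | h
      · simp [sw, hpK]
      · rw [Function.update_of_ne h]
        have : i ∈ K' ↔ i ∈ K := by
          rw [hK'def, Finset.mem_erase]
          exact ⟨fun h' => h'.2, fun h' => ⟨h, h'⟩⟩
        by_cases hiK : i ∈ K
        · simp [sw, hiK, this.mpr hiK]
        · have hiK' : i ∉ K' := fun h' => hiK (this.mp h')
          simp [sw, hiK, hiK']
    have hzeq : Function.update (sw K' b a) p (a p) = sw K b a := by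
      funext i
      rcases eq_or_ne i p with rfl | h
      · simp [sw, hpK]
      · rw [Function.update_of_ne h]
        have : i ∈ K' ↔ i ∈ K := by
          rw [hK'def, Finset.mem_erase]
          exact ⟨fun h' => h'.2, fun h' => ⟨h, h'⟩⟩
        by_cases hiK : i ∈ K
        · simp [sw, hiK, this.mpr hiK]
        · have hiK' : i ∉ K' := fun h' => hiK (this.mp h')
          simp [sw, hiK, hiK']
    rw [hyeq] at hy huy hby
    rw [hzeq] at hz hvz haz
    exact ⟨hy, hz, connected_trans' hau huy, haz,
      hby, connected_trans' hbv hvz⟩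

end Stmt5Aux
/-- switches of connected elements of a `t`-switchable set stay in the set
and remain connected to both endpoints. -/
theorem stmt5 (t : ℕ) (ht : t ≤ n) (S : Set (Idx r)) (hS : Switchable t S)
    (a b : Idx r) (hab : Connected S a b)
    (K : Finset (Fin n)) (hK : ∀ i ∈ K, (i : ℕ) < t) :
    sw K a b ∈ S ∧ sw K b a ∈ S ∧
    Connected S a (sw K a b) ∧ Connected S a (sw K b a) ∧
    Connected S b (sw K a b) ∧ Connected S b (sw K b a) := by
  obtain ⟨h1, h2, h3, h4, h5, h6⟩ :=
    multi_switch hS hab (K.filter fun i => a i ≠ b i).card K hK rfl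
  exact ⟨h1, h2, h3, h4, h5, h6⟩
end

section
/- Let S be a t-signed set and a, b connected elements of S. Suppose K, L ⊆ {i ∈ [t] : a_i ≠ b_i} are two subsets such that the monomials x_{s(K,a,b)}·x_{s(K,b,a)} and x_{s(L,a,b)}·x_{s(L,b,a)} coincide. Then h_{S,K,a,b} = h_{S,L,a,b}, i.e., the binomial h is well defined. -/
open MvPolynomial Finset

variable {n : ℕ} {r : Fin n → ℕ}

variable (k : Type*) [Field k]

/- ### Auxiliary lemmas -/

-- helpers
lemma hdist_refl (a : Idx r) : hdist a a = 0 := by simp [hdist]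

lemma hdist_eq_zero {a b : Idx r} (h : hdist a b = 0) : a = b := by
  funext i
  by_contra hne
  have hi : i ∈ univ.filter fun i => a i ≠ b i := by simp [hne]
  have := card_pos.mpr ⟨i, hi⟩
  rw [hdist] at h
  omega

lemma hdist_one_elim {a b : Idx r} (h : hdist a b = 1) :
    ∃ i, a i ≠ b i ∧ ∀ j, j ≠ i → a j = b j := by
  obtain ⟨i, hi⟩ := card_eq_one.mp h
  refine ⟨i, ?_, ?_⟩
  · have : i ∈ univ.filter fun i => a i ≠ b i := hi ▸ mem_singleton_self i
    simpa using this
  · intro j hj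
    by_contra hne
    have hr : j ∈ univ.filter fun i => a i ≠ b i := by simp [hne]
    rw [hi, mem_singleton] at hr
    exact hj hr

lemma hdist_one_intro {a b : Idx r} (i : Fin n) (h1 : a i ≠ b i)
    (h2 : ∀ j, j ≠ i → a j = b j) : hdist a b = 1 := by
  have hs : (univ.filter fun j => a j ≠ b j) = {i} := by
    ext j; simp only [mem_filter, mem_univ, true_and, mem_singleton]
    constructor
    · intro hj; by_contra hji; exact hj (h2 j hji)
    · rintro rfl; exact h1
  rw [hdist, hs, card_singleton]

lemma hdist_two_intro {a b : Idx r} (i i' : Fin n) (hne : i ≠ i')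
    (h1 : a i ≠ b i) (h2 : a i' ≠ b i')
    (h3 : ∀ j, j ≠ i → j ≠ i' → a j = b j) : hdist a b = 2 := by
  have hs : (univ.filter fun j => a j ≠ b j) = {i, i'} := by
    ext j; simp only [mem_filter, mem_univ, true_and, mem_insert, mem_singleton]
    constructor
    · intro hj; by_contra hji; push_neg at hji; exact hj (h3 j hji.1 hji.2)
    · rintro (rfl | rfl); exacts [h1, h2]
  rw [hdist, hs, card_pair hne]

lemma isPath_const {S : Set (Idx r)} {x : Idx r} (hx : x ∈ S) :
    IsPath S x x 0 (fun _ => x) :=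
  ⟨rfl, rfl, fun _ _ => hx, fun j hj => absurd hj (by omega)⟩

lemma isPath_prefix {S : Set (Idx r)} {x y : Idx r} {m : ℕ} {c : ℕ → Idx r}
    (h : IsPath S x y m c) {q : ℕ} (hq : q ≤ m) : IsPath S x (c q) q c :=
  ⟨h.1, rfl, fun j hj => h.2.2.1 j (le_trans hj hq),
    fun j hj => h.2.2.2 j (lt_of_lt_of_le hj hq)⟩

lemma isPath_suffix {S : Set (Idx r)} {x y : Idx r} {m : ℕ} {c : ℕ → Idx r}
    (h : IsPath S x y m c) {q : ℕ} (hq : q ≤ m) :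
    IsPath S (c q) y (m - q) (fun j => c (j + q)) := by
  refine ⟨by simp, ?_, fun j hj => h.2.2.1 _ (by omega), fun j hj => ?_⟩
  · show c (m - q + q) = y
    rw [Nat.sub_add_cancel hq]; exact h.2.1
  · have := h.2.2.2 (j + q) (by omega)
    simpa [Nat.add_right_comm] using this

lemma isPath_append {S : Set (Idx r)} {x y z : Idx r} {m1 m2 : ℕ}
    {c1 c2 : ℕ → Idx r} (h1 : IsPath S x y m1 c1) (h2 : IsPath S y z m2 c2) :
    IsPath S x z (m1 + m2) (fun j => if j < m1 then c1 j else c2 (j - m1)) := by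
  obtain ⟨ha1, hb1, hm1, hs1⟩ := h1
  obtain ⟨ha2, hb2, hm2, hs2⟩ := h2
  refine ⟨?_, ?_, ?_, ?_⟩
  · by_cases h : 0 < m1
    · simp [h, ha1]
    · have : m1 = 0 := by omega
      simp [this, ha2, ← ha1, this ▸ hb1]
  · have : ¬ m1 + m2 < m1 := by omega
    simp only [this, if_false]
    simpa using hb2
  · intro j hj
    by_cases h : j < m1
    · simp only [h, if_true]; exact hm1 j (by omega)
    · simp only [h, if_false]; exact hm2 _ (by omega)
  · intro j hj
    by_cases h : j + 1 < m1
    · simp only [h, show j < m1 by omega, if_true]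
      exact hs1 j (by omega)
    · by_cases h' : j < m1
      · have he : j + 1 = m1 := by omega
        simp only [h, h', if_true, if_false]
        rw [he, Nat.sub_self, ha2, ← hb1, ← he]
        exact hs1 j (by omega)
      · simp only [h, h', if_false]
        have : j + 1 - m1 = (j - m1) + 1 := by omega
        rw [this]
        exact hs2 (j - m1) (by omega)

lemma Connected.trans {S : Set (Idx r)} {x y z : Idx r}
    (h1 : Connected S x y) (h2 : Connected S y z) : Connected S x z := by
  obtain ⟨m1, c1, h1⟩ := h1
  obtain ⟨m2, c2, h2⟩ := h2
  exact ⟨m1 + m2, _, isPath_append h1 h2⟩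

lemma connected_of_isPath {S : Set (Idx r)} {x y : Idx r} {m : ℕ} {c : ℕ → Idx r}
    (h : IsPath S x y m c) : Connected S x y := ⟨m, c, h⟩

lemma connected_self {S : Set (Idx r)} {x : Idx r} (hx : x ∈ S) : Connected S x x :=
  ⟨0, _, isPath_const hx⟩

-- surgery lemma
lemma surgery {t : ℕ} {S : Set (Idx r)} (hsw : Switchable t S) :
    ∀ m : ℕ, ∀ (x y : Idx r) (c : ℕ → Idx r) (i : Fin n),
      IsPath S x y m c → 1 ≤ m → (i : ℕ) < t →
      (∀ j, j ≠ i → x j = c 1 j) → c 1 i ≠ y i →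
      ∃ m' c', IsPath S x y m' c' ∧ (m' + 1 = m ∨ m' + 2 = m) := by
  intro m
  induction m using Nat.strong_induction_on with
  | _ m IH =>
    intro x y c i hpath hm hit hoff hne
    obtain ⟨h0, hlast, hmem, hstep⟩ := hpath
    -- x i ≠ c 1 i
    have hxc1 : x i ≠ c 1 i := by
      intro he
      have : x = c 1 := by
        funext j
        by_cases hj : j = i
        · rw [hj]; exact he
        · exact hoff j hj
      have h1' := hstep 0 (by omega)
      rw [h0, ← this, hdist_refl] at h1'
      omega
    -- m ≥ 2
    rcases Nat.lt_or_ge m 2 with hm2 | hm2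
    · exfalso
      have : m = 1 := by omega
      rw [this] at hlast
      exact hne (by rw [hlast])
    -- step 1 structure
    have hstep1 := hstep 1 (by omega)
    obtain ⟨i'', hi''ne, hi''eq⟩ := hdist_one_elim hstep1
    by_cases hc2x : c 2 = x
    · -- cancel: drop two steps
      refine ⟨m - 2, fun j => c (j + 2), ⟨by simpa [hc2x], ?_, ?_, ?_⟩, Or.inr (by omega)⟩
      · show c (m - 2 + 2) = y
        rw [Nat.sub_add_cancel hm2]; exact hlast
      · intro j hj; exact hmem _ (by omega)
      · intro j hj
        have := hstep (j + 2) (by omega)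
        simpa [Nat.add_right_comm] using this
    · by_cases hii : i'' = i
      · -- merge: x → c 2 directly
        subst hii
        have hxd : x i'' ≠ c 2 i'' := by
          intro he
        -- then x = c 2
          apply hc2x
          funext j
          by_cases hj : j = i''
          · rw [hj, ← he]
          · rw [← hi''eq j hj, ← hoff j hj]
        have hd1 : hdist x (c 2) = 1 := by
          refine hdist_one_intro i'' hxd (fun j hj => ?_)
          rw [hoff j hj, hi''eq j hj]
        refine ⟨m - 1, fun j => if j = 0 then x else c (j + 1),
          ⟨by simp, ?_, ?_, ?_⟩, Or.inl (by omega)⟩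
        · have : m - 1 ≠ 0 := by omega
          simp only [this, if_false]
          rw [Nat.sub_add_cancel (by omega)]; exact hlast
        · intro j hj
          by_cases hj0 : j = 0
          · simp only [hj0, if_true]; exact h0 ▸ hmem 0 (by omega)
          · simp only [hj0, if_false]; exact hmem _ (by omega)
        · intro j hj
          by_cases hj0 : j = 0
          · subst hj0
            simp only [if_true]
            norm_num
            exact hd1
          · have : j + 1 ≠ 0 := by omega
            simp only [hj0, this, if_false]
            exact hstep (j + 1) (by omega)
      · -- switch case
        have hc1i : c 2 i = c 1 i := (hi''eq i (fun h => hii h.symm)).symm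
        have hxw2 : hdist x (c 2) = 2 := by
          refine hdist_two_intro i i'' (fun h => hii h.symm) ?_ ?_ ?_
          · rw [hc1i]; exact hxc1
          · rw [hoff i'' hii]; exact hi''ne
          · intro j hj1 hj2
            rw [hoff j hj1, hi''eq j hj2]
        have hw := (hsw x (h0 ▸ hmem 0 (by omega)) (c 2) (hmem 2 (by omega)) hxw2 i hit).2
        set w : Idx r := sw {i} (c 2) x with hwdef
        have hwi : w i = x i := by simp [hwdef, sw]
        have hwoff : ∀ j, j ≠ i → w j = c 2 j := by
          intro j hj; simp [hwdef, sw, hj]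
        -- path from w to y of length m - 1
        have hd' : IsPath S w y (m - 1) (fun j => if j = 0 then w else c (j + 1)) := by
          refine ⟨by simp, ?_, ?_, ?_⟩
          · have : m - 1 ≠ 0 := by omega
            simp only [this, if_false]
            rw [Nat.sub_add_cancel (by omega)]; exact hlast
          · intro j hj
            by_cases hj0 : j = 0
            · simp only [hj0, if_true]; exact hw
            · simp only [hj0, if_false]; exact hmem _ (by omega)
          · intro j hj
            by_cases hj0 : j = 0
            · subst hj0
              norm_num
              refine hdist_one_intro i ?_ (fun j hj => ?_)
              · rw [hwi, hc1i]; exact hxc1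
              · exact hwoff j hj
            · have : j + 1 ≠ 0 := by omega
              simp only [hj0, this, if_false]
              exact hstep (j + 1) (by omega)
        obtain ⟨m'', c'', hp'', hor⟩ := IH (m - 1) (by omega) w y _ i hd' (by omega) hit
          (fun j hj => by simp only [if_neg one_ne_zero]; exact hwoff j hj)
          (by simp only [if_neg one_ne_zero]; show c (1 + 1) i ≠ y i; rw [hc1i]; exact hne)
        -- prepend the step x → w
        have hxw : hdist x w = 1 := by
          refine hdist_one_intro i'' ?_ (fun j hj => ?_)
          · rw [hwoff i'' hii, hoff i'' hii]; exact hi''ne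
          · by_cases hji : j = i
            · rw [hji, hwi]
            · rw [hwoff j hji, hoff j hji, hi''eq j hj]
        refine ⟨m'' + 1, fun j => if j = 0 then x else c'' (j - 1), ⟨by simp, ?_, ?_, ?_⟩,
          by omega⟩
        · simp only [Nat.add_one_ne_zero, if_false, Nat.add_sub_cancel]
          exact hp''.2.1
        · intro j hj
          by_cases hj0 : j = 0
          · simp only [hj0, if_true]; exact h0 ▸ hmem 0 (by omega)
          · simp only [hj0, if_false]; exact hp''.2.2.1 _ (by omega)
        · intro j hj
          by_cases hj0 : j = 0
          · subst hj0
            norm_num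
            rw [hp''.1]
            exact hxw
          · have h1 : j + 1 ≠ 0 := by omega
            simp only [hj0, h1, if_false]
            have h2 : j + 1 - 1 = (j - 1) + 1 := by omega
            rw [h2]
            exact hp''.2.2.2 (j - 1) (by omega)

-- inner lemma: commute the first <t step to the front and resolve
lemma binner {t : ℕ} {S : Set (Idx r)} (hsw : Switchable t S) (a : Idx r)
    (H3 : ∀ x y, Connected S a x → Connected S a y → ∀ m m' p p',
      IsPath S x y m p → IsPath S x y m' p' → m % 2 = m' % 2)
    (m : ℕ)
    (IH : ∀ m', m' < m → ∀ (x y : Idx r) (c : ℕ → Idx r), Connected S a x →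
      IsPath S x y m' c → (∀ j : Fin n, t ≤ (j : ℕ) → x j = y j) →
      m' % 2 = hdist x y % 2) :
    ∀ p : ℕ, ∀ (x y : Idx r) (c : ℕ → Idx r), Connected S a x →
      IsPath S x y m c → (∀ j : Fin n, t ≤ (j : ℕ) → x j = y j) → p < m →
      (∀ q, q < p → ∀ i : Fin n, (i : ℕ) < t → c q i = c (q + 1) i) →
      (∃ i : Fin n, (i : ℕ) < t ∧ c p i ≠ c (p + 1) i) →
      m % 2 = hdist x y % 2 := by
  intro p
  induction p with
  | zero =>
    intro x y c hcx hpath hty hpm hq ⟨i, hit, hne⟩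
    obtain ⟨h0, hlast, hmem, hstep⟩ := hpath
    obtain ⟨i₀, hi₀ne, hi₀eq⟩ := hdist_one_elim (hstep 0 hpm)
    have hii₀ : i = i₀ := by
      by_contra hc; exact hne (hi₀eq i hc)
    subst hii₀
    have hcy : Connected S a y :=
      hcx.trans (connected_of_isPath ⟨h0, hlast, hmem, hstep⟩)
    have hc1x : ∀ j, j ≠ i → x j = c 1 j := by
      intro j hj; rw [← h0]; exact hi₀eq j hj
    by_cases hty1 : c 1 i = y i
    · -- step toward y : use outer IH on the suffix
      have hsuff : IsPath S (c 1) y (m - 1) (fun j => c (j + 1)) :=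
        isPath_suffix ⟨h0, hlast, hmem, hstep⟩ (by omega)
      have hconn1 : Connected S a (c 1) :=
        hcx.trans (connected_of_isPath (isPath_prefix ⟨h0, hlast, hmem, hstep⟩ (by omega : 1 ≤ m)))
      have hxyi : x i ≠ y i := by
        rw [← h0]; rw [← hty1]; exact hi₀ne
      have hgt : ∀ j : Fin n, t ≤ (j : ℕ) → c 1 j = y j := by
        intro j hj
        rw [← hc1x j (by intro hh; rw [hh] at hj; omega)]
        exact hty j hj
      have hIH := IH (m - 1) (by omega) (c 1) y _ hconn1 hsuff hgt
      -- hdist (c 1) y = hdist x y - 1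
      have hsets : (univ.filter fun j => c 1 j ≠ y j)
          = (univ.filter fun j => x j ≠ y j).erase i := by
        ext j
        simp only [mem_filter, mem_univ, true_and, mem_erase]
        by_cases hji : j = i
        · subst hji
          simp [hty1]
        · rw [← hc1x j hji]
          simp [hji]
      have hmemi : i ∈ univ.filter fun j => x j ≠ y j := by simp [hxyi]
      have hcard : hdist (c 1) y = hdist x y - 1 := by
        rw [hdist, hdist, hsets, card_erase_of_mem hmemi]
      have hpos : 0 < hdist x y := by
        rw [hdist]; exact card_pos.mpr ⟨i, hmemi⟩
      rw [hcard] at hIH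
      omega
    · -- surgery
      obtain ⟨m', c', hp', hor⟩ := surgery hsw m x y c i
        ⟨h0, hlast, hmem, hstep⟩ (by omega) hit hc1x hty1
      rcases hor with h1 | h2
      · have := H3 x y hcx hcy m m' c c' ⟨h0, hlast, hmem, hstep⟩ hp'
        omega
      · have := IH m' (by omega) x y c' hcx hp' hty
        omega
  | succ p ihp =>
    intro x y c hcx hpath hty hpm hq hex
    obtain ⟨h0, hlast, hmem, hstep⟩ := hpath
    -- step p : coordinate i' with t ≤ i'
    obtain ⟨i', hi'ne, hi'eq⟩ := hdist_one_elim (hstep p (by omega))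
    have hi't : t ≤ (i' : ℕ) := by
      by_contra hc
      exact hi'ne (hq p (by omega) i' (by omega))
    -- step p+1 : coordinate i₁ with i₁ < t
    obtain ⟨i₁, hi₁ne, hi₁eq⟩ := hdist_one_elim (hstep (p + 1) hpm)
    have hit : (i₁ : ℕ) < t := by
      obtain ⟨i0, hi0t, hi0ne⟩ := hex
      have : i0 = i₁ := by
        by_contra hc; exact hi0ne (hi₁eq i0 hc)
      rw [← this]; exact hi0t
    have hi₁i' : i₁ ≠ i' := by
      intro hh; rw [hh] at hit; omega
    -- hdist (c p) (c (p+2)) = 2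
    have hd2 : hdist (c p) (c (p + 2)) = 2 := by
      refine hdist_two_intro i₁ i' hi₁i' ?_ ?_ ?_
      · rw [hi'eq i₁ hi₁i']
        exact hi₁ne
      · intro hh
        exact hi'ne (by rw [hh, ← hi₁eq i' (Ne.symm hi₁i')])
      · intro j hj1 hj2
        rw [hi'eq j hj2]
        exact hi₁eq j hj1
    have hw := (hsw (c p) (hmem p (by omega)) (c (p + 2)) (hmem (p + 2) (by omega)) hd2 i₁ hit).1
    set w : Idx r := sw {i₁} (c p) (c (p + 2)) with hwdef
    have hwi : w i₁ = c (p + 2) i₁ := by simp [hwdef, sw]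
    have hwoff : ∀ j, j ≠ i₁ → w j = c p j := by
      intro j hj; simp [hwdef, sw, hj]
    set c2 : ℕ → Idx r := fun j => if j = p + 1 then w else c j with hc2def
    have hc2path : IsPath S x y m c2 := by
      refine ⟨?_, ?_, ?_, ?_⟩
      · show (if 0 = p + 1 then w else c 0) = x
        rw [if_neg (by omega : 0 ≠ p + 1)]; exact h0
      · show (if m = p + 1 then w else c m) = y
        rw [if_neg (by omega : m ≠ p + 1)]; exact hlast
      · intro j hj
        show (if j = p + 1 then w else c j) ∈ S
        by_cases hjp : j = p + 1
        · rw [if_pos hjp]; exact hw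
        · rw [if_neg hjp]; exact hmem j hj
      · intro j hj
        show hdist (if j = p + 1 then w else c j) (if j + 1 = p + 1 then w else c (j + 1)) = 1
        by_cases hjp : j = p
        · rw [if_neg (by omega : j ≠ p + 1), if_pos (by omega : j + 1 = p + 1), hjp]
          refine hdist_one_intro i₁ ?_ (fun l hl => ?_)
          · rw [hwi, hi'eq i₁ hi₁i']
            intro hh
            exact hi₁ne hh
          · exact (hwoff l hl).symm
        · by_cases hjp1 : j = p + 1
          · subst hjp1
            rw [if_pos rfl, if_neg (by omega : p + 1 + 1 ≠ p + 1)]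
            refine hdist_one_intro i' ?_ (fun l hl => ?_)
            · rw [hwoff i' (Ne.symm hi₁i'), ← hi₁eq i' (Ne.symm hi₁i')]
              exact hi'ne
            · by_cases hli : l = i₁
              · rw [hli, hwi]
              · rw [hwoff l hli, hi'eq l hl]
                exact hi₁eq l hli
          · rw [if_neg hjp1, if_neg (by omega : j + 1 ≠ p + 1)]
            exact hstep j hj
    refine ihp x y c2 hcx hc2path hty (by omega) ?_ ?_
    · intro q hq' l hl
      show (if q = p + 1 then w else c q) l = (if q + 1 = p + 1 then w else c (q + 1)) l
      rw [if_neg (by omega : q ≠ p + 1), if_neg (by omega : q + 1 ≠ p + 1)]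
      exact hq q (by omega) l hl
    · refine ⟨i₁, hit, ?_⟩
      show (if p = p + 1 then w else c p) i₁ ≠ (if p + 1 = p + 1 then w else c (p + 1)) i₁
      rw [if_neg (by omega : p ≠ p + 1), if_pos rfl, hwi, hi'eq i₁ hi₁i']
      intro hh
      exact hi₁ne hh

-- main parity lemma
lemma path_parity {t : ℕ} {S : Set (Idx r)} (hsw : Switchable t S) (a : Idx r)
    (H3 : ∀ x y, Connected S a x → Connected S a y → ∀ m m' p p',
      IsPath S x y m p → IsPath S x y m' p' → m % 2 = m' % 2) :
    ∀ m : ℕ, ∀ (x y : Idx r) (c : ℕ → Idx r), Connected S a x →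
      IsPath S x y m c → (∀ j : Fin n, t ≤ (j : ℕ) → x j = y j) →
      m % 2 = hdist x y % 2 := by
  intro m
  induction m using Nat.strong_induction_on with
  | _ m IH =>
    intro x y c hcx hpath hty
    by_cases hex : ∃ p, p < m ∧ ∃ i : Fin n, (i : ℕ) < t ∧ c p i ≠ c (p + 1) i
    · obtain ⟨p, hpm, hi⟩ := hex
      classical
      have hP : ∃ p, p < m ∧ ∃ i : Fin n, (i : ℕ) < t ∧ c p i ≠ c (p + 1) i := ⟨p, hpm, hi⟩
      obtain ⟨hp₀m, hp₀i⟩ := Nat.find_spec hP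
      refine binner hsw a H3 m IH (Nat.find hP) x y c hcx hpath hty hp₀m ?_ hp₀i
      intro q hq i hit
      by_contra hc
      exact Nat.find_min hP hq ⟨by omega, i, hit, hc⟩
    · push_neg at hex
      -- all steps are ≥ t : x = y
      have hconst : ∀ q, q ≤ m → ∀ j : Fin n, (j : ℕ) < t → c q j = x j := by
        intro q
        induction q with
        | zero => intro _ j _; rw [hpath.1]
        | succ q ihq =>
          intro hqm j hj
          rw [← hex q (by omega) j hj]
          exact ihq (by omega) j hj
      have hxy : x = y := by
        funext j
        rcases Nat.lt_or_ge (j : ℕ) t with hj | hj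
        · rw [← hpath.1, ← hpath.2.1, hconst 0 (by omega) j hj, hconst m le_rfl j hj]
        · exact hty j hj
      subst hxy
      have := H3 x x hcx hcx m 0 c (fun _ => x) hpath
        (isPath_const (hpath.1 ▸ hpath.2.2.1 0 (by omega)))
      rw [this, hdist_refl]

lemma pl_spec {S : Set (Idx r)} {a b : Idx r} (h : Connected S a b) :
    ∃ c, IsPath S a b (pl S a b) c := by
  have hne : {m | ∃ c, IsPath S a b m c}.Nonempty := by
    obtain ⟨m, c, hc⟩ := h; exact ⟨m, ⟨c, hc⟩⟩
  exact Nat.sInf_mem hne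

lemma pl_eq_one {S : Set (Idx r)} {a b : Idx r} (ha : a ∈ S) (hb : b ∈ S)
    (hd : hdist a b = 1) : pl S a b = 1 := by
  have h1 : 1 ∈ {m | ∃ c, IsPath S a b m c} := by
    refine ⟨fun j => if j = 0 then a else b, by simp, by simp, ?_, ?_⟩
    · intro j hj
      by_cases h : j = 0 <;> simp [h, ha, hb]
    · intro j hj
      have hj0 : j = 0 := by omega
      subst hj0
      simpa using hd
  have hle : pl S a b ≤ 1 := Nat.sInf_le h1
  obtain ⟨c, hc'⟩ := Nat.sInf_mem (⟨1, h1⟩ : {m | ∃ c, IsPath S a b m c}.Nonempty)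
  have hc : IsPath S a b (pl S a b) c := hc'
  rcases Nat.lt_or_ge (pl S a b) 1 with h | h
  · exfalso
    have h0 : pl S a b = 0 := by omega
    rw [h0] at hc
    have hab : a = b := by rw [← hc.1, hc.2.1]
    rw [hab, hdist_refl] at hd
    omega
  · omega

lemma neg_one_pow_congr' {R : Type*} [Ring R] {e e' : ℕ} (h : e % 2 = e' % 2) :
    ((-1 : R)) ^ e = (-1) ^ e' := by
  conv_lhs => rw [← Nat.div_add_mod e 2, pow_add, pow_mul, neg_one_sq, one_pow, one_mul]
  conv_rhs => rw [← Nat.div_add_mod e' 2, pow_add, pow_mul, neg_one_sq, one_pow, one_mul]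
  rw [h]

lemma X_mul_X_cases {σ K : Type*} [Field K] {u v p q : σ}
    (h : (X u * X v : MvPolynomial σ K) = X p * X q) :
    (u = p ∧ v = q) ∨ (u = q ∧ v = p) := by
  classical
  have h1 : (X u * X v : MvPolynomial σ K)
      = monomial (Finsupp.single u 1 + Finsupp.single v 1) 1 := by
    rw [X, X, monomial_mul, mul_one]
  have h2 : (X p * X q : MvPolynomial σ K)
      = monomial (Finsupp.single p 1 + Finsupp.single q 1) 1 := by
    rw [X, X, monomial_mul, mul_one]
  rw [h1, h2, monomial_eq_monomial_iff] at h
  rcases h with ⟨hs, -⟩ | ⟨h0, -⟩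
  · rw [Finsupp.single_add_single_eq_single_add_single one_ne_zero one_ne_zero] at hs
    rcases hs with h | ⟨-, h⟩ | ⟨habs, -⟩
    · exact Or.inl h
    · exact Or.inr h
    · exact absurd habs (by omega)
  · exact absurd h0 one_ne_zero

/-- the binomial `h_{S,K,a,b}` is well defined. -/
theorem stmt8 (h2 : (2 : k) ≠ 0) (t : ℕ) (S : Set (Idx r)) (hS : Signed t S)
    (a b : Idx r) (hab : Connected S a b) (K L : Finset (Fin n))
    (hK : ∀ i ∈ K, (i : ℕ) < t ∧ a i ≠ b i) (hL : ∀ i ∈ L, (i : ℕ) < t ∧ a i ≠ b i)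
    (hmon : (X (sw K a b) * X (sw K b a) : MvPolynomial (Idx r) k) =
      X (sw L a b) * X (sw L b a)) :
    hbin k S K a b = hbin k S L a b := by

  classical
  obtain ⟨m0, c0, hp0⟩ := hab
  have hab : Connected S a b := ⟨m0, c0, hp0⟩
  have haS : a ∈ S := hp0.1 ▸ hp0.2.2.1 0 (by omega)
  have hbS : b ∈ S := hp0.2.1 ▸ hp0.2.2.1 m0 le_rfl
  by_cases habe : a = b
  · have hKe : K = ∅ := eq_empty_of_forall_notMem (fun i hi => (hK i hi).2 (by rw [habe]))
    have hLe : L = ∅ := eq_empty_of_forall_notMem (fun i hi => (hL i hi).2 (by rw [habe]))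
    rw [hKe, hLe]
  rcases X_mul_X_cases hmon with ⟨he1, he2⟩ | ⟨he1, he2⟩
  · -- same switches : K = L
    have hKL : K = L := by
      ext i
      have hcf := congrFun he1 i
      simp only [sw] at hcf
      constructor
      · intro hiK
        rw [if_pos hiK] at hcf
        by_contra hiL
        rw [if_neg hiL] at hcf
        exact (hK i hiK).2 hcf.symm
      · intro hiL
        rw [if_pos hiL] at hcf
        by_contra hiK
        rw [if_neg hiK] at hcf
        exact (hL i hiL).2 hcf
    rw [hKL]
  · -- crossed switches
    have hiff : ∀ i, a i ≠ b i → (i ∈ K ↔ i ∉ L) := by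
      intro i hne
      have hcf := congrFun he1 i
      simp only [sw] at hcf
      constructor
      · intro hiK hiL
        rw [if_pos hiK, if_pos hiL] at hcf
        exact hne hcf.symm
      · intro hiL
        by_contra hiK
        rw [if_neg hiK, if_neg hiL] at hcf
        exact hne hcf
    have hdisj : Disjoint K L := by
      rw [Finset.disjoint_left]
      exact fun {i} hiK => (hiff i (hK i hiK).2).1 hiK
    have hunion : (univ.filter fun i => a i ≠ b i) = K ∪ L := by
      ext i
      simp only [mem_filter, mem_univ, true_and, mem_union]
      constructor
      · intro hne
        by_cases hiK : i ∈ K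
        · exact Or.inl hiK
        · refine Or.inr (not_not.mp (fun hiL => hiK ((hiff i hne).mpr hiL)))
      · rintro (hiK | hiL)
        exacts [(hK i hiK).2, (hL i hiL).2]
    have hcard : hdist a b = K.card + L.card := by
      rw [hdist, hunion, card_union_of_disjoint hdisj]
    have hDt : ∀ j : Fin n, t ≤ (j : ℕ) → a j = b j := by
      intro j hj
      by_contra hne
      have hjKL : j ∈ K ∪ L := by rw [← hunion]; simp [hne]
      rcases mem_union.mp hjKL with hjK | hjL
      · have := (hK j hjK).1; omega
      · have := (hL j hjL).1; omega
    have hpar : pl S a b % 2 = hdist a b % 2 := by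
      rcases hS.2 a haS with h1 | h2' | h3
      · exfalso
        apply habe
        funext j
        rcases Nat.lt_or_ge (j : ℕ) t with hj | hj
        · exact h1 a b (connected_self haS) hab j hj
        · exact hDt j hj
      · have hd1 : hdist a b = 1 := by
          have hle := h2' a b (connected_self haS) hab
          have hne0 : hdist a b ≠ 0 := fun h0 => habe (hdist_eq_zero h0)
          omega
        rw [pl_eq_one haS hbS hd1, hd1]
      · obtain ⟨c, hc⟩ := pl_spec hab
        exact path_parity hS.1 a h3 (pl S a b) a b c (connected_self haS) hc hDt
    have hmod : (K.card * (pl S a b - 1)) % 2 = (L.card * (pl S a b - 1)) % 2 := by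
      have hpar' : pl S a b % 2 = (K.card + L.card) % 2 := by rw [hpar, hcard]
      rcases Nat.even_or_odd (pl S a b - 1) with he | ho
      · rw [Nat.even_iff] at he
        rw [Nat.mul_mod, Nat.mul_mod L.card, he]
        simp
      · rw [Nat.odd_iff] at ho
        have hKL2 : K.card % 2 = L.card % 2 := by omega
        rw [Nat.mul_mod, Nat.mul_mod L.card, hKL2]
    have hsign : ((-1 : MvPolynomial (Idx r) k)) ^ (K.card * (pl S a b - 1))
        = (-1) ^ (L.card * (pl S a b - 1)) := neg_one_pow_congr' hmod
    simp only [hbin]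
    rw [hmon, hsign]
end
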